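/- Consider n groups partitioned into a set R of rationalists and a set M of imitators evolving on an interval [T_l, T_{l+1}) under the vaccine-surplus dynamics: ẋ_i(t) = −κ x_i(t) 1(c_i > 0) for i ∈ R and ẋ_i(t) = −κ x_i(t) (1 − Σ_{q=1}^n x_q(t)) c_i 1(c_i > 0) for i ∈ M, where 1(z) = 1 if z > 0 and 0 otherwise. Suppose c_i ≤ 0 for all i ∈ M, and let c′ be another payoff vector with c′_i ≤ 0 for all i ∈ M and with 1(c_i > 0) = 1(c′_i > 0) for every i ∈ R. Then any solution of the dynamics with payoffs c and any solution with payoffs c′ that have the same state at T_l coincide on [T_l, T_{l+1}); in particular the outputs y(t) = 1 − Σ_q x_q(t) coincide, so the payoff values on such a subinterval are unidentifiable. -/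

import Mathlib

open Finset

/-- The indicator `1(z > 0)` as a real number. -/
noncomputable def indR (z : ℝ) : ℝ := if 0 < z then 1 else 0

/-- Uniqueness for the scalar linear ODE `f' = a f` on `[Tl, Tl1)`. -/
lemma ode_uniq (a Tl Tl1 : ℝ) (hT : Tl < Tl1) (f g : ℝ → ℝ)
    (hf : ∀ t ∈ Set.Ico Tl Tl1, HasDerivWithinAt f (a * f t) (Set.Ico Tl Tl1) t)
    (hg : ∀ t ∈ Set.Ico Tl Tl1, HasDerivWithinAt g (a * g t) (Set.Ico Tl Tl1) t)
    (h0 : f Tl = g Tl) :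
    ∀ t ∈ Set.Ico Tl Tl1, f t = g t := by
  set s := Set.Ico Tl Tl1 with hs
  have hTl : Tl ∈ s := ⟨le_refl _, hT⟩
  have hconv : Convex ℝ s := convex_Ico _ _
  have key : ∀ F : ℝ → ℝ, (∀ t ∈ s, HasDerivWithinAt F (a * F t) s t) →
      ∀ t ∈ s, F t * Real.exp (-(a * t)) = F Tl * Real.exp (-(a * Tl)) := by
    intro F hF t ht
    have hder : ∀ u ∈ s, HasDerivWithinAt (fun τ => F τ * Real.exp (-(a * τ)))
        ((fun _ : ℝ => (0 : ℝ)) u) s u := by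
      intro u hu
      have h1 : HasDerivAt (fun τ : ℝ => -(a * τ)) (-a) u := by
        have h := ((hasDerivAt_id u).const_mul a).neg
        simp only [mul_one] at h
        exact h
      have he : HasDerivAt (fun τ : ℝ => Real.exp (-(a * τ)))
          (Real.exp (-(a * u)) * -a) u := (Real.hasDerivAt_exp _).comp u h1
      have := (hF u hu).mul he.hasDerivWithinAt
      exact this.congr_deriv (by show _ = (0 : ℝ); ring)
    have := hconv.norm_image_sub_le_of_norm_hasDerivWithin_le (C := 0) hder
      (fun u _ => by simp) hTl ht
    have h2 : ‖F t * Real.exp (-(a * t)) - F Tl * Real.exp (-(a * Tl))‖ ≤ 0 := by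
      simpa using this
    have := norm_nonneg (F t * Real.exp (-(a * t)) - F Tl * Real.exp (-(a * Tl)))
    have h3 : F t * Real.exp (-(a * t)) - F Tl * Real.exp (-(a * Tl)) = 0 := by
      rw [← norm_eq_zero]; linarith
    linarith
  intro t ht
  have hFt := key f hf t ht
  have hGt := key g hg t ht
  have hne : Real.exp (-(a * t)) ≠ 0 := Real.exp_ne_zero _
  have : f t * Real.exp (-(a * t)) = g t * Real.exp (-(a * t)) := by
    rw [hFt, hGt, h0]
  exact mul_right_cancel₀ hne this

/-- On a vaccine-surplus subinterval `[T_l, T_{l+1})` on which all imitative payoff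
values are non-positive (for both payoff vectors `c` and `c′`), and on which the signs
of the rationalist payoffs agree between `c` and `c′`, any solution of the dynamics
with payoffs `c` and any solution with payoffs `c′` that have the same state at `T_l`
coincide on `[T_l, T_{l+1})`; in particular the outputs coincide, so the payoff values
on such a subinterval are unidentifiable. -/
theorem stmt_11 (n : ℕ) (R M : Finset (Fin n))
    (hpart : Disjoint R M ∧ R ∪ M = Finset.univ)
    (κ Tl Tl1 : ℝ) (hT : Tl < Tl1)
    (c c' : Fin n → ℝ)
    (hcM : ∀ i ∈ M, c i ≤ 0) (hc'M : ∀ i ∈ M, c' i ≤ 0)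
    (hcR : ∀ i ∈ R, (0 < c i ↔ 0 < c' i))
    (x x' : ℝ → Fin n → ℝ)
    (hxR : ∀ i ∈ R, ∀ t ∈ Set.Ico Tl Tl1,
      HasDerivWithinAt (fun s => x s i) (-κ * x t i * indR (c i)) (Set.Ico Tl Tl1) t)
    (hxM : ∀ i ∈ M, ∀ t ∈ Set.Ico Tl Tl1,
      HasDerivWithinAt (fun s => x s i)
        (-κ * x t i * (1 - ∑ q, x t q) * c i * indR (c i)) (Set.Ico Tl Tl1) t)
    (hx'R : ∀ i ∈ R, ∀ t ∈ Set.Ico Tl Tl1,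
      HasDerivWithinAt (fun s => x' s i) (-κ * x' t i * indR (c' i)) (Set.Ico Tl Tl1) t)
    (hx'M : ∀ i ∈ M, ∀ t ∈ Set.Ico Tl Tl1,
      HasDerivWithinAt (fun s => x' s i)
        (-κ * x' t i * (1 - ∑ q, x' t q) * c' i * indR (c' i)) (Set.Ico Tl Tl1) t)
    (h0 : x Tl = x' Tl) :
    ∀ t ∈ Set.Ico Tl Tl1, x t = x' t := by
  intro t ht
  funext i
  have hRM : i ∈ R ∨ i ∈ M := by
    have : i ∈ R ∪ M := hpart.2 ▸ Finset.mem_univ i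
    exact Finset.mem_union.mp this
  have h0i : x Tl i = x' Tl i := congrFun h0 i
  rcases hRM with hi | hi
  · -- rationalist: coefficient a = -κ * indR (c i)
    have hind : indR (c' i) = indR (c i) := by
      unfold indR
      simp [hcR i hi]
    refine ode_uniq (-κ * indR (c i)) Tl Tl1 hT (fun s => x s i) (fun s => x' s i)
      (fun u hu => ?_) (fun u hu => ?_) h0i t ht
    · convert hxR i hi u hu using 1; ring
    · have := hx'R i hi u hu
      rw [hind] at this
      convert this using 1; ring
  · -- imitator: derivative is 0
    have hci : indR (c i) = 0 := by simp [indR, not_lt.mpr (hcM i hi)]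
    have hc'i : indR (c' i) = 0 := by simp [indR, not_lt.mpr (hc'M i hi)]
    refine ode_uniq 0 Tl Tl1 hT (fun s => x s i) (fun s => x' s i)
      (fun u hu => ?_) (fun u hu => ?_) h0i t ht
    · have := hxM i hi u hu
      rw [hci] at this
      convert this using 1; ring
    · have := hx'M i hi u hu
      rw [hc'i] at this
      convert this using 1; ring
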